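/- Let θ be an invertible antisymmetric real 4×4 matrix, g a symmetric positive definite real 4×4 matrix, e^σ := √(det θ · det g), G := e^{−σ} θ g θᵀ, and J := e^{−σ/2} θ g. Then (1/4)·tr(G g) ≥ 1, and equality holds if and only if G g = I₄, equivalently J² = −I₄, equivalently G = g⁻¹ (i.e. the effective metric G_{μν} coincides with the induced metric g_{μν}, so that J is an almost-complex structure). -/

import Mathlib

open Matrix
open scoped MatrixOrder


lemma skew_det4 (K : Matrix (Fin 4) (Fin 4) ℝ) (hK : Kᵀ = -K) :
    K.det = (K 0 1 * K 2 3 - K 0 2 * K 1 3 + K 0 3 * K 1 2)^2 := by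
  have e : ∀ i j, K j i = -K i j := by
    intro i j; have := congrFun (congrFun hK i) j; simpa using this
  have d : ∀ i, K i i = 0 := by intro i; have := e i i; linarith
  have hKeq : K = !![0, K 0 1, K 0 2, K 0 3; -K 0 1, 0, K 1 2, K 1 3;
      -K 0 2, -K 1 2, 0, K 2 3; -K 0 3, -K 1 3, -K 2 3, 0] := by
    ext i j
    fin_cases i <;> fin_cases j <;>
      simp [d, e 0 1, e 0 2, e 0 3, e 1 2, e 1 3, e 2 3]
  rw [hKeq]
  simp [Matrix.det_succ_row_zero, Fin.sum_univ_succ]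
  norm_num [Fin.succAbove, Fin.lt_def, show (Fin.castSucc 2 : Fin 4) = 2 from rfl]
  simp [Matrix.cons_val]
  ring

set_option maxHeartbeats 1000000 in
lemma quat_sq (a b c : ℝ) (h : a^2 + b^2 + c^2 = 1) :
    (!![0, a, b, c; -a, 0, c, -b; -b, -c, 0, a; -c, b, -a, 0] :
      Matrix (Fin 4) (Fin 4) ℝ) ^ 2 = -1 := by
  ext i j
  fin_cases i <;> fin_cases j <;>
    simp [pow_two, Matrix.mul_apply, Fin.sum_univ_four, Matrix.one_apply] <;>
    first | ring1 | linarith [h]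

set_option maxHeartbeats 1000000 in
lemma quat_sq' (a b c : ℝ) (h : a^2 + b^2 + c^2 = 1) :
    (!![0, a, b, c; -a, 0, -c, b; -b, c, 0, -a; -c, -b, a, 0] :
      Matrix (Fin 4) (Fin 4) ℝ) ^ 2 = -1 := by
  ext i j
  fin_cases i <;> fin_cases j <;>
    simp [pow_two, Matrix.mul_apply, Fin.sum_univ_four, Matrix.one_apply] <;>
    first | ring1 | linarith [h]

set_option maxHeartbeats 1000000 in
lemma skew_stuff (K : Matrix (Fin 4) (Fin 4) ℝ) (hK : Kᵀ = -K) (hdet : K.det = 1) :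
    4 ≤ (Kᵀ * K).trace ∧ ((Kᵀ * K).trace = 4 → K ^ 2 = -1) := by
  have e : ∀ i j, K j i = -K i j := by
    intro i j; have := congrFun (congrFun hK i) j; simpa using this
  have d : ∀ i, K i i = 0 := by intro i; have := e i i; linarith
  set a := K 0 1 with ha'
  set b := K 0 2 with hb'
  set c := K 0 3 with hc'
  set dd := K 1 2 with hd'
  set ee := K 1 3 with he'
  set f := K 2 3 with hf'
  have hKeq : K = !![0, a, b, c; -a, 0, dd, ee; -b, -dd, 0, f; -c, -ee, -f, 0] := by
    ext i j
    fin_cases i <;> fin_cases j <;>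
      simp [d, e 0 1, e 0 2, e 0 3, e 1 2, e 1 3, e 2 3, ha', hb', hc', hd', he', hf']
  have hP : (a * f - b * ee + c * dd) ^ 2 = 1 := by
    rw [← skew_det4 K hK, hdet]
  have hTr : (Kᵀ * K).trace = 2 * (a^2 + b^2 + c^2 + dd^2 + ee^2 + f^2) := by
    rw [hKeq]
    simp [Matrix.trace, Matrix.mul_apply, Fin.sum_univ_four, Matrix.transpose]
    ring
  have hcase : a * f - b * ee + c * dd = 1 ∨ a * f - b * ee + c * dd = -1 := by
    have h0 : (a * f - b * ee + c * dd - 1) * (a * f - b * ee + c * dd + 1) = 0 := by nlinarith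
    rcases mul_eq_zero.mp h0 with h | h
    · left; linarith
    · right; linarith
  rcases hcase with hP1 | hP1
  · constructor
    · rw [hTr]
      nlinarith [sq_nonneg (a - f), sq_nonneg (b + ee), sq_nonneg (c - dd)]
    · intro hT
      rw [hTr] at hT
      have h1 : (a - f)^2 + (b + ee)^2 + (c - dd)^2 = 0 := by linear_combination hT / 2 - 2 * hP1
      have s1 : (a - f)^2 = 0 := by linarith [sq_nonneg (a - f), sq_nonneg (b + ee), sq_nonneg (c - dd)]
      have s2 : (b + ee)^2 = 0 := by linarith [sq_nonneg (a - f), sq_nonneg (b + ee), sq_nonneg (c - dd)]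
      have s3 : (c - dd)^2 = 0 := by linarith [sq_nonneg (a - f), sq_nonneg (b + ee), sq_nonneg (c - dd)]
      have hf : f = a := by have := sq_eq_zero_iff.mp s1; linarith
      have he : ee = -b := by have := sq_eq_zero_iff.mp s2; linarith
      have hdc : dd = c := by have := sq_eq_zero_iff.mp s3; linarith
      have hs1 : a^2 + b^2 + c^2 = 1 := by rw [hf, he, hdc] at hP1; linear_combination hP1
      rw [hKeq, hf, he, hdc]
      simp only [neg_neg]
      exact quat_sq a b c hs1
  · constructor
    · rw [hTr]
      nlinarith [sq_nonneg (a + f), sq_nonneg (b - ee), sq_nonneg (c + dd)]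
    · intro hT
      rw [hTr] at hT
      have h1 : (a + f)^2 + (b - ee)^2 + (c + dd)^2 = 0 := by linear_combination hT / 2 + 2 * hP1
      have s1 : (a + f)^2 = 0 := by linarith [sq_nonneg (a + f), sq_nonneg (b - ee), sq_nonneg (c + dd)]
      have s2 : (b - ee)^2 = 0 := by linarith [sq_nonneg (a + f), sq_nonneg (b - ee), sq_nonneg (c + dd)]
      have s3 : (c + dd)^2 = 0 := by linarith [sq_nonneg (a + f), sq_nonneg (b - ee), sq_nonneg (c + dd)]
      have hf : f = -a := by have := sq_eq_zero_iff.mp s1; linarith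
      have he : ee = b := by have := sq_eq_zero_iff.mp s2; linarith
      have hdc : dd = -c := by have := sq_eq_zero_iff.mp s3; linarith
      have hs1 : a^2 + b^2 + c^2 = 1 := by rw [hf, he, hdc] at hP1; linear_combination -hP1
      rw [hKeq, hf, he, hdc]
      simp only [neg_neg]
      exact quat_sq' a b c hs1

set_option maxHeartbeats 2000000 in
/-- `(1/4)·tr(G g) ≥ 1`, with equality iff `G g = 1`, iff `J² = -1`, iff `G = g⁻¹`,
where `G = e^{-σ} θ g θᵀ` and `J = e^{-σ/2} θ g`, `e^σ = √(det θ · det g)`. -/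
theorem trace_Gg_ge_one_and_equality_cases
    (θ g G J : Matrix (Fin 4) (Fin 4) ℝ)
    (hθ : θᵀ = -θ) (hθu : IsUnit θ) (hg : g.PosDef)
    (hG : G = (Real.sqrt (θ.det * g.det))⁻¹ • (θ * g * θᵀ))
    (hJ : J = (Real.sqrt (Real.sqrt (θ.det * g.det)))⁻¹ • (θ * g)) :
    1 ≤ (G * g).trace / 4 ∧
    ((G * g).trace / 4 = 1 ↔ G * g = 1) ∧
    (G * g = 1 ↔ J ^ 2 = -1) ∧
    (G * g = 1 ↔ G = g⁻¹) := by
  have hdg : 0 < g.det := hg.det_pos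
  have hθd0 : θ.det ≠ 0 := ((Matrix.isUnit_iff_isUnit_det θ).mp hθu).ne_zero
  have hθd : 0 ≤ θ.det := by rw [skew_det4 θ hθ]; positivity
  have hprod : 0 < θ.det * g.det := mul_pos (lt_of_le_of_ne hθd (Ne.symm hθd0)) hdg
  set s := Real.sqrt (θ.det * g.det) with hs'
  set t := Real.sqrt s with ht'
  have hs : 0 < s := Real.sqrt_pos.mpr hprod
  have hs2 : s * s = θ.det * g.det := Real.mul_self_sqrt hprod.le
  have ht : 0 < t := Real.sqrt_pos.mpr hs
  have ht2 : t * t = s := Real.mul_self_sqrt hs.le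
  have hJ2 : J ^ 2 = s⁻¹ • (θ * g * (θ * g)) := by
    rw [hJ, pow_two, Matrix.smul_mul, Matrix.mul_smul, smul_smul, ← mul_inv, ht2]
  have hGg : G * g = -(J ^ 2) := by
    rw [hG, hJ2, hθ, Matrix.smul_mul, ← smul_neg]
    congr 1
    simp only [Matrix.mul_neg, Matrix.neg_mul, mul_assoc]
  have hgd : IsUnit g.det := isUnit_iff_ne_zero.mpr hdg.ne'
  have iff4 : G * g = 1 ↔ G = g⁻¹ := by
    constructor
    · intro h
      have h2 := congrArg (fun M => M * g⁻¹) h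
      simpa [mul_assoc, Matrix.mul_nonsing_inv g hgd] using h2
    · intro h; rw [h, Matrix.nonsing_inv_mul g hgd]
  have iff3 : G * g = 1 ↔ J ^ 2 = -1 := by rw [hGg, neg_eq_iff_eq_neg]
  -- square root of g
  set r := CFC.sqrt g with hr'
  have hrpsd : r.PosSemidef := (CFC.sqrt_nonneg g).posSemidef
  have hrT : rᵀ = r := by
    rw [← Matrix.conjTranspose_eq_transpose_of_trivial]; exact hrpsd.1
  have hr2 : r * r = g := CFC.sqrt_mul_sqrt_self g hg.posSemidef.nonneg
  have hdr2 : r.det * r.det = g.det := by rw [← Matrix.det_mul, hr2]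
  have hrd : IsUnit r.det := by
    refine isUnit_iff_ne_zero.mpr fun h0 => hdg.ne' ?_
    rw [← hdr2, h0, zero_mul]
  have hgr : g * r⁻¹ = r := by rw [← hr2, mul_assoc, Matrix.mul_nonsing_inv r hrd, mul_one]
  set K := t⁻¹ • (r * θ * r) with hK'
  have hKT : Kᵀ = -K := by
    rw [hK', Matrix.transpose_smul, Matrix.transpose_mul, Matrix.transpose_mul, hrT, hθ]
    simp only [Matrix.mul_neg, Matrix.neg_mul, smul_neg, mul_assoc]
  have hr2' : ∀ X : Matrix (Fin 4) (Fin 4) ℝ, r * (r * X) = g * X := by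
    intro X; rw [← mul_assoc, hr2]
  have hK2 : K ^ 2 = r * J ^ 2 * r⁻¹ := by
    rw [hK', hJ2, pow_two, Matrix.smul_mul, Matrix.mul_smul, smul_smul, ← mul_inv, ht2,
        Matrix.mul_smul, Matrix.smul_mul]
    congr 1
    simp only [mul_assoc]
    rw [hr2', hgr]
  have hdetK : K.det = 1 := by
    have h5 : (r * θ * r).det = θ.det * g.det := by
      rw [Matrix.det_mul, Matrix.det_mul, ← hdr2]; ring
    have h4 : t ^ 4 = θ.det * g.det := by
      rw [show t ^ 4 = t * t * (t * t) by ring, ht2, hs2]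
    rw [hK', Matrix.det_smul, h5, Fintype.card_fin, inv_pow, h4,
        inv_mul_cancel₀ hprod.ne']
  obtain ⟨hineq, heqc⟩ := skew_stuff K hKT hdetK
  have htrK : (Kᵀ * K).trace = -(K ^ 2).trace := by
    rw [hKT, Matrix.neg_mul, Matrix.trace_neg, pow_two]
  have htrKJ : (K ^ 2).trace = (J ^ 2).trace := by
    rw [hK2, Matrix.trace_mul_comm, ← mul_assoc, Matrix.nonsing_inv_mul r hrd, one_mul]
  have htrace : (G * g).trace = (Kᵀ * K).trace := by
    rw [hGg, Matrix.trace_neg, htrK, htrKJ]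
  refine ⟨?_, ?_, iff3, iff4⟩
  · rw [htrace]; linarith
  · constructor
    · intro h
      have h4 : (Kᵀ * K).trace = 4 := by rw [← htrace]; linarith
      have hK21 := heqc h4
      have h5 : r * J ^ 2 * r⁻¹ = -1 := by rw [← hK2, hK21]
      have hJ21 : J ^ 2 = -1 := by
        have h7 : r⁻¹ * (r * J ^ 2 * r⁻¹) * r = J ^ 2 := by
          rw [← mul_assoc, ← mul_assoc, Matrix.nonsing_inv_mul r hrd, one_mul, mul_assoc,
              Matrix.nonsing_inv_mul r hrd, mul_one]
        rw [← h7, h5]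
        simp [Matrix.mul_neg, Matrix.neg_mul, Matrix.nonsing_inv_mul r hrd]
      rw [iff3]; exact hJ21
    · intro h
      rw [h]; simp
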